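/- Over F_2, if R ⊆ S_n is a maximal-cardinality family with pairwise gcd of degree at most 1 and n is even with n ≥ 4, then for every monic irreducible g of degree n/2 (with g ≠ x), g^2 ∈ R. -/

import Mathlib

open Polynomial

namespace MCS

abbrev Poly : Type := Polynomial (ZMod 2)

lemma zmod2_eq_one {a : ZMod 2} (h : a ≠ 0) : a = 1 := by
  fin_cases a
  · exact absurd rfl h
  · rfl

lemma monic_of_ne_zero {p : Poly} (hp : p ≠ 0) : p.Monic := by
  have h := Polynomial.leadingCoeff_ne_zero.mpr hp
  exact zmod2_eq_one h

lemma isUnit_eq_one {u : Poly} (hu : IsUnit u) : u = 1 := by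
  obtain ⟨a, ha, rfl⟩ := Polynomial.isUnit_iff.mp hu
  have : a ≠ 0 := ha.ne_zero
  rw [zmod2_eq_one this, map_one]

lemma associated_eq {p q : Poly} (h : Associated p q) : p = q := by
  obtain ⟨u, rfl⟩ := h
  rw [isUnit_eq_one u.isUnit, mul_one]

lemma prime_X_add_one : Prime (X + 1 : Poly) := by
  have : Irreducible (X + 1 : Poly) := by
    have := Polynomial.irreducible_of_degree_eq_one (R := ZMod 2) (p := X + 1) ?_
    · exact this
    · simpa using Polynomial.degree_X_add_C (1 : ZMod 2)
  exact this.prime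

lemma prime_X : Prime (X : Poly) := by
  have : Irreducible (X : Poly) := by
    apply Polynomial.irreducible_of_degree_eq_one
    simp [Polynomial.degree_X]
  exact this.prime

lemma natDegree_pos_of_prime {p : Poly} (hp : Prime p) : 1 ≤ p.natDegree := by
  by_contra h
  push_neg at h
  interval_cases hn : p.natDegree
  obtain ⟨a, ha⟩ := Polynomial.natDegree_eq_zero.mp hn
  rcases eq_or_ne a 0 with rfl|h0
  · simp at ha; exact hp.ne_zero ha.symm
  · exact hp.not_unit (ha ▸ (Polynomial.isUnit_C.mpr (zmod2_eq_one h0 ▸ isUnit_one)))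

/-- a prime dividing a poly with nonzero constant term, of natDegree ≤ 1, is X+1 -/
lemma prime_eq_X_add_one {p : Poly} (hp : Prime p) (hdeg : p.natDegree ≤ 1)
    (h0 : p.coeff 0 ≠ 0) : p = X + 1 := by
  have h1 : p.natDegree = 1 := le_antisymm hdeg (natDegree_pos_of_prime hp)
  have hm : p.Monic := monic_of_ne_zero hp.ne_zero
  have := hm.eq_X_add_C h1
  rwa [zmod2_eq_one h0] at this

lemma eval_zero_ne_iff {p : Poly} : p.eval 0 ≠ 0 ↔ p.coeff 0 ≠ 0 := by
  rw [Polynomial.coeff_zero_eq_eval_zero]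

lemma pow_two_dvd {G : Poly} (hG0 : G ≠ 0) (h2 : 2 ≤ G.natDegree)
    (hall : ∀ p : Poly, Prime p → p ∣ G → p = X + 1) : ((X+1):Poly)^2 ∣ G := by
  have hGu : ¬ IsUnit G := by
    intro h
    rw [isUnit_eq_one h] at h2
    simp at h2
  obtain ⟨p, hpirr, hpG⟩ := WfDvdMonoid.exists_irreducible_factor hGu hG0
  have hp1 : p = X + 1 := hall p hpirr.prime hpG
  subst hp1
  obtain ⟨G', hGeq⟩ := hpG
  have hX1 : ((X+1):Poly) ≠ 0 := prime_X_add_one.ne_zero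
  have hG'0 : G' ≠ 0 := by rintro rfl; rw [mul_zero] at hGeq; exact hG0 hGeq
  have hdX : ((X+1:Poly)).natDegree = 1 := by
    simpa using Polynomial.natDegree_X_add_C (1 : ZMod 2)
  have hdG : G.natDegree = 1 + G'.natDegree := by
    rw [hGeq, Polynomial.natDegree_mul hX1 hG'0, hdX]
  have hG'deg : 1 ≤ G'.natDegree := by omega
  have hG'u : ¬ IsUnit G' := by
    intro h
    rw [isUnit_eq_one h] at hG'deg
    simp at hG'deg
  obtain ⟨q, hqirr, hqG'⟩ := WfDvdMonoid.exists_irreducible_factor hG'u hG'0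
  have hq1 : q = X + 1 := by
    apply hall q hqirr.prime
    rw [hGeq]
    exact Dvd.dvd.mul_left hqG' _
  subst hq1
  obtain ⟨c, hc⟩ := hqG'
  exact ⟨c, by rw [hGeq, hc]; ring⟩

/-- Main tool to check the pair condition. -/
lemma natDegree_gcd_le_one {w e : Poly} (hw : w ≠ 0)
    (hcom : ∀ p : Poly, Prime p → p ∣ w → p ∣ e → p = X + 1)
    (hsq : ¬ (X+1)^2 ∣ w ∨ ¬ (X+1)^2 ∣ e) :
    (EuclideanDomain.gcd w e).natDegree ≤ 1 := by
  by_contra hdeg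
  push_neg at hdeg
  have hGw : EuclideanDomain.gcd w e ∣ w := EuclideanDomain.gcd_dvd_left w e
  have hGe : EuclideanDomain.gcd w e ∣ e := EuclideanDomain.gcd_dvd_right w e
  have hG0 : EuclideanDomain.gcd w e ≠ 0 := by
    intro h
    rw [h] at hGw
    exact hw (zero_dvd_iff.mp hGw)
  have hdvd := pow_two_dvd hG0 (by omega)
    (fun p hp hpG => hcom p hp (hpG.trans hGw) (hpG.trans hGe))
  rcases hsq with h | h
  · exact h (hdvd.trans hGw)
  · exact h (hdvd.trans hGe)

/-- unique ownership of primes of degree ≥ 2 within a pairwise-family -/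
lemma owner_unique {T : Set Poly}
    (hpair : ∀ f ∈ T, ∀ g ∈ T, f ≠ g → (EuclideanDomain.gcd f g).natDegree ≤ 1)
    {q e₁ e₂ : Poly} (hq : 2 ≤ q.natDegree) (h1 : e₁ ∈ T) (h2 : e₂ ∈ T)
    (hne : e₁ ≠ 0)
    (hd1 : q ∣ e₁) (hd2 : q ∣ e₂) : e₁ = e₂ := by
  by_contra hne'
  have hgcd := hpair e₁ h1 e₂ h2 hne'
  have : q ∣ EuclideanDomain.gcd e₁ e₂ := EuclideanDomain.dvd_gcd hd1 hd2
  have hg0 : EuclideanDomain.gcd e₁ e₂ ≠ 0 := by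
    intro h
    rw [EuclideanDomain.gcd_eq_zero_iff] at h
    exact hne h.1
  have := Polynomial.natDegree_le_of_dvd this hg0
  omega

lemma finite_degree_le (n : ℕ) : {p : Poly | p.natDegree ≤ n}.Finite := by
  have hinj : Set.InjOn (fun p : Poly => (fun i : Fin (n+1) => p.coeff i))
      {p : Poly | p.natDegree ≤ n} := by
    intro p hp q hq hpq
    apply Polynomial.ext
    intro k
    by_cases hk : k ≤ n
    · exact congrFun hpq ⟨k, by omega⟩
    · have hp' : p.natDegree < k := by simp only [Set.mem_setOf_eq] at hp; omega
      have hq' : q.natDegree < k := by simp only [Set.mem_setOf_eq] at hq; omega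
      rw [Polynomial.coeff_eq_zero_of_natDegree_lt hp',
        Polynomial.coeff_eq_zero_of_natDegree_lt hq']
  have : ((fun p : Poly => (fun i : Fin (n+1) => p.coeff i)) '' {p : Poly | p.natDegree ≤ n}).Finite :=
    Set.toFinite _
  exact Set.Finite.of_finite_image this hinj



lemma two_pow_sub_one_dvd {t m : ℕ} (h : (2^t - 1) ∣ (2^m - 1)) (hmod' : 1 ≤ t) : t ∣ m := by
  rcases Nat.eq_zero_or_pos m with rfl|hm
  · simp
  have hmod : m % t < t := Nat.mod_lt _ (by omega)
  have hsplit : m = t * (m / t) + m % t := (Nat.div_add_mod m t).symm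
  have h1 : (2^t - 1) ∣ (2^(t*(m/t)) - 1) := by
    have := Nat.sub_dvd_pow_sub_pow (2^t) 1 (m/t)
    simpa [← pow_mul] using this
  have h2 : 2^m - 2^(m % t) = 2^(m % t) * (2^(t*(m/t)) - 1) := by
    rw [Nat.mul_sub, mul_one, ← pow_add]
    congr 2
    omega
  have h3 : (2^t - 1) ∣ (2^m - 2^(m % t)) := h2 ▸ Dvd.dvd.mul_left h1 _
  have hle : 2^(m % t) ≤ 2^m := Nat.pow_le_pow_right (by norm_num) (by omega)
  have h4 : (2^t - 1) ∣ (2^(m % t) - 1) := by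
    have heq : (2^m - 1) - (2^m - 2^(m % t)) = 2^(m % t) - 1 := by
      have h1r : 1 ≤ 2^(m % t) := Nat.one_le_two_pow
      omega
    exact heq ▸ Nat.dvd_sub h h3
  have h5 : 2^(m % t) - 1 < 2^t - 1 := by
    have hlt : 2^(m % t) < 2^t := Nat.pow_lt_pow_right (by norm_num) hmod
    have h1r : 1 ≤ 2^(m % t) := Nat.one_le_two_pow
    omega
  have h6 : 2^(m % t) - 1 = 0 := by
    by_contra h0
    have := Nat.le_of_dvd (by omega) h4
    omega
  have h1r : 1 ≤ 2^(m % t) := Nat.one_le_two_pow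
  have h7 : 2^(m % t) = 1 := by omega
  have h8 : m % t = 0 := by
    by_contra h0
    have : 2^1 ≤ 2^(m % t) := Nat.pow_le_pow_right (by norm_num) (by omega)
    omega
  exact ⟨m / t, by omega⟩

lemma irr_dvd {p : Poly} (hp : Irreducible p) : p ∣ (X^(2^p.natDegree) - X : Poly) := by
  haveI : Fact (Irreducible p) := ⟨hp⟩
  have hp0 : p ≠ 0 := hp.ne_zero
  let pb := AdjoinRoot.powerBasis hp0
  letI : Fintype (AdjoinRoot p) := Module.fintypeOfFintype pb.basis
  have hcard : Fintype.card (AdjoinRoot p) = 2 ^ p.natDegree := by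
    rw [Module.card_fintype pb.basis, ZMod.card 2, Fintype.card_fin, AdjoinRoot.powerBasis_dim]
  have ha : (AdjoinRoot.root p) ^ (2 ^ p.natDegree) = AdjoinRoot.root p := by
    rw [← hcard]; exact FiniteField.pow_card _
  have heval : (Polynomial.aeval (AdjoinRoot.root p)) (X^(2^p.natDegree) - X : Poly) = 0 := by
    simp [ha]
  have hmin : minpoly (ZMod 2) (AdjoinRoot.root p) = p := by
    rw [AdjoinRoot.minpoly_root hp0, (monic_of_ne_zero hp0).leadingCoeff]
    simp
  have := minpoly.dvd (ZMod 2) (AdjoinRoot.root p) heval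
  rwa [hmin] at this

lemma natDegree_dvd_of_dvd {p : Poly} (hp : Irreducible p) {m : ℕ}
    (hdvd : p ∣ (X^(2^m) - X : Poly)) : p.natDegree ∣ m := by
  haveI : Fact (Irreducible p) := ⟨hp⟩
  have hp0 : p ≠ 0 := hp.ne_zero
  let pb := AdjoinRoot.powerBasis hp0
  letI : Fintype (AdjoinRoot p) := Module.fintypeOfFintype pb.basis
  have hcard : Fintype.card (AdjoinRoot p) = 2 ^ p.natDegree := by
    rw [Module.card_fintype pb.basis, ZMod.card 2, Fintype.card_fin, AdjoinRoot.powerBasis_dim]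
  have ht1 : 1 ≤ p.natDegree := by
    by_contra h
    have h0 : p.natDegree = 0 := by omega
    have h2 : Fintype.card (AdjoinRoot p) = 1 := by rw [hcard, h0, pow_zero]
    exact (Fintype.one_lt_card_iff_nontrivial.mpr inferInstance).ne' h2
  -- root satisfies x^(2^m) = x
  have hmin : minpoly (ZMod 2) (AdjoinRoot.root p) = p := by
    rw [AdjoinRoot.minpoly_root hp0, (monic_of_ne_zero hp0).leadingCoeff]
    simp
  have haev : (Polynomial.aeval (AdjoinRoot.root p)) p = 0 := by
    have h := minpoly.aeval (ZMod 2) (AdjoinRoot.root p)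
    rwa [hmin] at h
  have ha : (AdjoinRoot.root p) ^ (2^m) = AdjoinRoot.root p := by
    obtain ⟨c, hc⟩ := hdvd
    have h0 : (Polynomial.aeval (AdjoinRoot.root p)) (X^(2^m) - X : Poly) = 0 := by
      rw [hc, map_mul, haev, zero_mul]
    have := h0
    simp only [map_sub, map_pow, Polynomial.aeval_X] at this
    have h2m : 1 ≤ 2^m := Nat.one_le_two_pow
    rw [sub_eq_zero] at this
    exact this
  -- all elements satisfy x^(2^m) = x
  haveI : CharP (AdjoinRoot p) 2 :=
    charP_of_injective_ringHom (algebraMap (ZMod 2) (AdjoinRoot p)).injective 2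
  have hcomp := RingHom.ext_zmod
    ((iterateFrobenius (AdjoinRoot p) 2 m).comp (algebraMap (ZMod 2) (AdjoinRoot p)))
    (algebraMap (ZMod 2) (AdjoinRoot p))
  let ψ : AdjoinRoot p →ₐ[ZMod 2] AdjoinRoot p :=
    AlgHom.mk' (iterateFrobenius (AdjoinRoot p) 2 m) (fun c x => by
      rw [Algebra.smul_def, Algebra.smul_def, map_mul]
      congr 1
      exact RingHom.congr_fun hcomp c)
  have hψroot : ψ (AdjoinRoot.root p) = (AlgHom.id (ZMod 2) (AdjoinRoot p)) (AdjoinRoot.root p) := by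
    show iterateFrobenius (AdjoinRoot p) 2 m (AdjoinRoot.root p) = AdjoinRoot.root p
    rw [iterateFrobenius_def]
    exact ha
  have hψ := AdjoinRoot.algHom_ext hψroot
  have hall : ∀ x : AdjoinRoot p, x ^ (2^m) = x := by
    intro x
    have := DFunLike.congr_fun hψ x
    simpa [ψ, iterateFrobenius_def] using this
  -- cyclic units
  obtain ⟨u, hu⟩ := IsCyclic.exists_generator (α := (AdjoinRoot p)ˣ)
  have horder : orderOf u = 2 ^ p.natDegree - 1 := by
    rw [orderOf_eq_card_of_forall_mem_zpowers hu, Nat.card_eq_fintype_card,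
      Fintype.card_units, hcard]
  have hupow : u ^ (2^m - 1) = 1 := by
    apply Units.ext
    rw [Units.val_pow_eq_pow_val, Units.val_one]
    have h1 : (u : AdjoinRoot p)^(2^m) = u := hall u
    have h2m : 1 ≤ 2^m := Nat.one_le_two_pow
    have h2 : (u : AdjoinRoot p)^(2^m - 1) * u = (u : AdjoinRoot p)^(2^m) := by
      rw [← pow_succ]
      congr 1
      omega
    have h3 : (u : AdjoinRoot p)^(2^m - 1) * u = 1 * u := by rw [h2, h1, one_mul]
    exact mul_right_cancel₀ (Units.ne_zero u) h3
  have hdvd2 : (2 ^ p.natDegree - 1) ∣ (2^m - 1) := horder ▸ orderOf_dvd_of_pow_eq_one hupow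
  exact two_pow_sub_one_dvd hdvd2 ht1

lemma irr_finite (t : ℕ) : {p : Poly | Irreducible p ∧ p.natDegree = t}.Finite :=
  (finite_degree_le t).subset (fun p hp => le_of_eq hp.2)

noncomputable def irrF (t : ℕ) : Finset Poly := (irr_finite t).toFinset

noncomputable def NN (t : ℕ) : ℕ := (irrF t).card

lemma mem_irrF {t : ℕ} {p : Poly} : p ∈ irrF t ↔ Irreducible p ∧ p.natDegree = t := by
  simp [irrF, Set.Finite.mem_toFinset, Set.mem_setOf_eq]

lemma X_add_one_eq_X_sub_C : (X + 1 : Poly) = X - C 1 := by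
  have h : (-1 : ZMod 2) = 1 := by decide
  rw [sub_eq_add_neg, ← map_neg, h, map_one]

lemma coprime_of_distinct_irreducible {p q : Poly} (hp : Irreducible p) (hq : Irreducible q)
    (hne : p ≠ q) : IsCoprime p q := by
  rw [hp.coprime_iff_not_dvd]
  intro hdvd
  obtain ⟨c, hc⟩ := hdvd
  rcases hq.isUnit_or_isUnit hc with h | h
  · exact hp.not_isUnit h
  · rw [isUnit_eq_one h, mul_one] at hc
    exact hne hc.symm

lemma Pm_natDegree {m : ℕ} (hm : 1 ≤ m) : (X^(2^m) - X : Poly).natDegree = 2^m := by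
  have h1 : (X : Poly).natDegree < (X^(2^m) : Poly).natDegree := by
    rw [Polynomial.natDegree_X_pow, Polynomial.natDegree_X]
    exact Nat.one_lt_two_pow (by omega)
  rw [Polynomial.natDegree_sub_eq_left_of_natDegree_lt h1, Polynomial.natDegree_X_pow]

lemma Pm_ne_zero {m : ℕ} (hm : 1 ≤ m) : (X^(2^m) - X : Poly) ≠ 0 := by
  intro h
  have := Pm_natDegree hm
  rw [h] at this
  simp at this
  have : 1 < 2^m := Nat.one_lt_two_pow (by omega)
  omega

lemma tN_le2 {t : ℕ} (ht : 2 ≤ t) : t * NN t + 2 ≤ 2^t := by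
  classical
  set P : Poly := X^(2^t) - X with hP
  have hP0 : P ≠ 0 := Pm_ne_zero (by omega)
  have hXdvd : (X : Poly) ∣ P := by
    apply dvd_sub _ dvd_rfl
    exact dvd_pow_self X (by positivity)
  have hX1dvd : (X + 1 : Poly) ∣ P := by
    rw [X_add_one_eq_X_sub_C, Polynomial.dvd_iff_isRoot]
    simp [Polynomial.IsRoot, hP, one_pow]
  have hmem : ∀ p ∈ irrF t, p ∣ P := by
    intro p hp
    obtain ⟨hirr, hdeg⟩ := mem_irrF.mp hp
    have := irr_dvd hirr
    rwa [hdeg] at this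
  have hXnotmem : (X : Poly) ∉ insert (X+1 : Poly) (irrF t) := by
    intro hmem'
    rcases Finset.mem_insert.mp hmem' with h | h
    · have h0 := congrArg (Polynomial.eval 0) h
      simp at h0
    · have := (mem_irrF.mp h).2
      rw [Polynomial.natDegree_X] at this
      omega
  have hX1notmem : (X + 1 : Poly) ∉ irrF t := by
    intro h
    have := (mem_irrF.mp h).2
    have h1 : (X + 1 : Poly).natDegree = 1 := by
      simpa using Polynomial.natDegree_X_add_C (1 : ZMod 2)
    omega
  set F : Finset Poly := insert X (insert (X+1) (irrF t)) with hF
  have hpairwise : (↑F : Set Poly).Pairwise (Function.onFun IsCoprime (id : Poly → Poly)) := by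
    intro a ha b hb hab
    simp only [hF, Finset.coe_insert, Set.mem_insert_iff, Finset.mem_coe] at ha hb
    have hirr : ∀ c : Poly, c = X ∨ c = X + 1 ∨ c ∈ irrF t → Irreducible c := by
      rintro c (rfl | rfl | hc)
      · exact prime_X.irreducible
      · exact prime_X_add_one.irreducible
      · exact (mem_irrF.mp hc).1
    exact coprime_of_distinct_irreducible (hirr a ha) (hirr b hb) hab
  have hproddvd : F.prod id ∣ P := by
    apply Finset.prod_dvd_of_coprime hpairwise
    intro p hp
    simp only [hF, Finset.mem_insert] at hp
    rcases hp with rfl | rfl | hp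
    · exact hXdvd
    · exact hX1dvd
    · exact hmem p hp
  have hdegprod : (F.prod id).natDegree = 2 + t * NN t := by
    rw [Polynomial.natDegree_prod _ _ (fun p hp => by
      simp only [hF, Finset.mem_insert] at hp
      rcases hp with rfl | rfl | hp
      · exact prime_X.ne_zero
      · exact prime_X_add_one.ne_zero
      · exact (mem_irrF.mp hp).1.ne_zero)]
    rw [hF, Finset.sum_insert hXnotmem, Finset.sum_insert hX1notmem]
    have h1 : (X : Poly).natDegree = 1 := Polynomial.natDegree_X
    have h2 : (X + 1 : Poly).natDegree = 1 := by
      simpa using Polynomial.natDegree_X_add_C (1 : ZMod 2)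
    simp only [id_eq]
    have h3 : ∑ p ∈ irrF t, p.natDegree = t * NN t := by
      rw [Finset.sum_congr rfl (fun p hp => (mem_irrF.mp hp).2), Finset.sum_const, NN,
        smul_eq_mul, mul_comm]
    rw [h1, h2, h3]
    omega
  have := Polynomial.natDegree_le_of_dvd hproddvd hP0
  rw [hdegprod, Pm_natDegree (by omega)] at this
  omega

lemma N1_le : NN 1 ≤ 2 := by
  classical
  have hsub : irrF 1 ⊆ ({X, X + 1} : Finset Poly) := by
    intro p hp
    obtain ⟨hirr, hdeg⟩ := mem_irrF.mp hp
    have hm : p.Monic := monic_of_ne_zero hirr.ne_zero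
    have := hm.eq_X_add_C hdeg
    rcases eq_or_ne (p.coeff 0) 0 with h0 | h0
    · rw [h0, map_zero, add_zero] at this
      simp [this]
    · rw [zmod2_eq_one h0, map_one] at this
      simp [this]
  calc NN 1 ≤ ({X, X+1} : Finset Poly).card := Finset.card_le_card hsub
    _ ≤ 2 := Finset.card_insert_le _ _ |>.trans (by simp)

lemma tN_le {t : ℕ} (ht : 1 ≤ t) : t * NN t ≤ 2^t := by
  rcases eq_or_lt_of_le ht with h | h
  · rw [← h]
    simpa using N1_le
  · have := tN_le2 (t := t) (by omega)
    omega

lemma geom_Icc (K : ℕ) : ∑ t ∈ Finset.Icc 1 K, 2^t = 2^(K+1) - 2 := by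
  induction K with
  | zero => simp
  | succ k ih =>
    rcases Nat.eq_zero_or_pos k with rfl | hk
    · simp
    · rw [Finset.sum_Icc_succ_top (by omega : 1 ≤ k + 1), ih]
      have h1 : 2 ≤ 2^(k+1) := by
        calc 2 = 2^1 := by norm_num
        _ ≤ 2^(k+1) := Nat.pow_le_pow_right (by norm_num) (by omega)
      have h2 : (2:ℕ)^(k+1+1) = 2^(k+1) * 2 := pow_succ 2 (k+1)
      omega

lemma proper_divisor_le_half {t m : ℕ} (hm : 1 ≤ m) (hdvd : t ∣ m) (hne : t ≠ m) : t ≤ m / 2 := by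
  obtain ⟨k, hk⟩ := hdvd
  have hk2 : 2 ≤ k := by
    rcases k with _ | _ | k
    · omega
    · omega
    · omega
  rw [Nat.le_div_iff_mul_le (by norm_num)]
  have : t * 2 ≤ t * k := Nat.mul_le_mul_left t hk2
  omega

lemma lowerN {m : ℕ} (hm : 2 ≤ m) : 2^m + 2 ≤ m * NN m + 2^(m/2 + 1) := by
  classical
  have hm1 : 1 ≤ m := by omega
  set P : Poly := X^(2^m) - X with hP
  have hP0 : P ≠ 0 := Pm_ne_zero hm1
  have hsep : P.Separable := by
    rw [Polynomial.separable_def]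
    have hder : derivative P = -1 := by
      rw [hP, Polynomial.derivative_sub, Polynomial.derivative_X_pow, Polynomial.derivative_X]
      have h2 : ((2^m : ℕ) : ZMod 2) = 0 := by
        rw [Nat.cast_pow]
        have h3 : ((2:ℕ) : ZMod 2) = 0 := by decide
        rw [h3, zero_pow (by omega)]
      rw [h2, map_zero, zero_mul, zero_sub]
    rw [hder]
    exact ⟨0, -1, by ring⟩
  have hsf : Squarefree P := hsep.squarefree
  have hnodup : (UniqueFactorizationMonoid.normalizedFactors P).Nodup :=
    (UniqueFactorizationMonoid.squarefree_iff_nodup_normalizedFactors hP0).mp hsf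
  set F : Finset Poly := ⟨UniqueFactorizationMonoid.normalizedFactors P, hnodup⟩ with hF
  have hmemF : ∀ p ∈ F, Prime p := by
    intro p hp
    exact UniqueFactorizationMonoid.prime_of_normalized_factor p hp
  have hdvdF : ∀ p ∈ F, p ∣ P := by
    intro p hp
    exact UniqueFactorizationMonoid.dvd_of_mem_normalizedFactors hp
  have hprodF : F.prod id = P := by
    have := UniqueFactorizationMonoid.prod_normalizedFactors hP0
    exact associated_eq (by simpa [hF, Finset.prod] using this)
  have hsum : ∑ p ∈ F, p.natDegree = 2^m := by
    have := Polynomial.natDegree_prod F id (fun p hp => (hmemF p hp).ne_zero)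
    rw [hprodF, Pm_natDegree hm1] at this
    simpa [id_eq] using this.symm
  -- split
  have hsplit := Finset.sum_filter_add_sum_filter_not F (fun p => p.natDegree = m)
      (fun p => p.natDegree)
  -- big part
  have hbig : ∑ p ∈ F.filter (fun p => p.natDegree = m), p.natDegree ≤ m * NN m := by
    have hsub : F.filter (fun p => p.natDegree = m) ⊆ irrF m := by
      intro p hp
      rw [Finset.mem_filter] at hp
      exact mem_irrF.mpr ⟨(hmemF p hp.1).irreducible, hp.2⟩
    calc ∑ p ∈ F.filter (fun p => p.natDegree = m), p.natDegree
        = ∑ p ∈ F.filter (fun p => p.natDegree = m), m :=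
          Finset.sum_congr rfl (fun p hp => (Finset.mem_filter.mp hp).2)
      _ = (F.filter (fun p => p.natDegree = m)).card * m := by rw [Finset.sum_const, smul_eq_mul]
      _ ≤ NN m * m := Nat.mul_le_mul_right m (Finset.card_le_card hsub)
      _ = m * NN m := mul_comm _ _
  -- small part
  have hsmall : ∑ p ∈ F.filter (fun p => ¬ p.natDegree = m), p.natDegree ≤ 2^(m/2+1) - 2 := by
    have hmaps : ∀ p ∈ F.filter (fun p => ¬ p.natDegree = m), p.natDegree ∈ Finset.Icc 1 (m/2) := by
      intro p hp
      rw [Finset.mem_filter] at hp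
      have hprime := hmemF p hp.1
      have hdvd' : p.natDegree ∣ m := by
        apply natDegree_dvd_of_dvd hprime.irreducible
        rw [← hP]
        exact hdvdF p hp.1
      rw [Finset.mem_Icc]
      exact ⟨natDegree_pos_of_prime hprime, proper_divisor_le_half hm1 hdvd' hp.2⟩
    have hfib := Finset.sum_fiberwise_of_maps_to hmaps (fun p => p.natDegree)
    rw [← hfib]
    have hinner : ∀ t ∈ Finset.Icc 1 (m/2),
        ∑ p ∈ (F.filter (fun p => ¬ p.natDegree = m)).filter (fun p => p.natDegree = t),
          p.natDegree ≤ 2^t := by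
      intro t htmem
      rw [Finset.mem_Icc] at htmem
      have hsub : (F.filter (fun p => ¬ p.natDegree = m)).filter (fun p => p.natDegree = t)
          ⊆ irrF t := by
        intro p hp
        simp only [Finset.mem_filter] at hp
        exact mem_irrF.mpr ⟨(hmemF p hp.1.1).irreducible, hp.2⟩
      calc ∑ p ∈ (F.filter (fun p => ¬ p.natDegree = m)).filter (fun p => p.natDegree = t),
            p.natDegree
          = ∑ p ∈ (F.filter (fun p => ¬ p.natDegree = m)).filter (fun p => p.natDegree = t), t :=
            Finset.sum_congr rfl (fun p hp => (Finset.mem_filter.mp hp).2)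
        _ = ((F.filter (fun p => ¬ p.natDegree = m)).filter (fun p => p.natDegree = t)).card * t := by
            rw [Finset.sum_const, smul_eq_mul]
        _ ≤ NN t * t := Nat.mul_le_mul_right t (Finset.card_le_card hsub)
        _ = t * NN t := mul_comm _ _
        _ ≤ 2^t := tN_le htmem.1
    calc ∑ t ∈ Finset.Icc 1 (m/2), ∑ p ∈ (F.filter (fun p => ¬ p.natDegree = m)).filter
          (fun p => p.natDegree = t), p.natDegree
        ≤ ∑ t ∈ Finset.Icc 1 (m/2), 2^t := Finset.sum_le_sum hinner
      _ = 2^(m/2+1) - 2 := geom_Icc (m/2)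
  have h2le : 2 ≤ 2^(m/2+1) := by
    calc 2 = 2^1 := by norm_num
    _ ≤ 2^(m/2+1) := Nat.pow_le_pow_right (by norm_num) (by omega)
  omega

def nu (t : ℕ) : ℕ := (2^t - 2)/t
def S (M : ℕ) : ℕ := ∑ t ∈ Finset.Icc 2 M, nu t

lemma N_le_nu {t : ℕ} (ht : 2 ≤ t) : NN t ≤ nu t := by
  rw [nu, Nat.le_div_iff_mul_le (by omega), mul_comm]
  have := tN_le2 ht
  omega

lemma S_succ {M : ℕ} (hM : 1 ≤ M) : S (M+1) = S M + nu (M+1) :=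
  Finset.sum_Icc_succ_top (by omega) _

lemma nu_le_halfpow {t : ℕ} (ht : 2 ≤ t) : nu t ≤ 2^(t-1) - 1 := by
  rw [nu]
  have h1 : (2^t - 2)/t ≤ (2^t - 2)/2 := Nat.div_le_div_left ht (by omega)
  have h2 : 2^t = 2 * 2^(t-1) := by
    rw [← pow_succ']
    congr 1
    omega
  omega

lemma S_bound : ∀ M, 1 ≤ M → S M + 2 ≤ 2^M := by
  intro M
  induction M with
  | zero => omega
  | succ k ih =>
    intro _
    rcases Nat.lt_or_ge k 1 with h | h
    · interval_cases k
      · decide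
    · have ih := ih h
      rw [S_succ h]
      have h1 : nu (k+1) ≤ 2^k - 1 := by
        have := nu_le_halfpow (t := k+1) (by omega)
        simpa using this
      have h2 : (2:ℕ)^(k+1) = 2 * 2^k := by rw [← pow_succ']
      omega

lemma Gbound : ∀ M, 8 ≤ M → (M+4) * (S M + 2) ≤ 2^(M+2) := by
  intro M
  induction M with
  | zero => intro h; omega
  | succ k ih =>
    intro hM
    rcases Nat.lt_or_ge k 8 with h | h
    · -- k+1 = 8
      have hk : k = 7 := by omega
      subst hk
      have hS : S 8 = 71 := by decide
      rw [hS]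
      norm_num
    · have hG := ih h
      rw [S_succ (by omega)]
      have ha1 : S k + 2 ≤ 2^k := S_bound k (by omega)
      have ha2 : (k+1) * nu (k+1) ≤ 2^(k+1) := by
        have := Nat.div_mul_le_self (2^(k+1) - 2) (k+1)
        rw [nu, mul_comm]
        omega
      have ha3 : 4 * nu (k+1) ≤ 2^k := by
        have h1 : nu (k+1) ≤ (2^(k+1) - 2)/8 := by
          rw [nu]
          exact Nat.div_le_div_left (by omega) (by omega)
        have h2 : (2:ℕ)^(k+1) = 8 * 2^(k-2) := by
          rw [show k+1 = 3 + (k-2) by omega, pow_add]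
          norm_num
        have h3 : (2^(k+1) - 2)/8 ≤ 2^(k-2) := by omega
        have h4 : (2:ℕ)^k = 4 * 2^(k-2) := by
          rw [show k = 2 + (k-2) by omega, pow_add]
          norm_num
        omega
      have hexp : (k+1+4) * ((S k + nu (k+1)) + 2)
          = (k+4) * (S k + 2) + (S k + 2) + ((k+1) * nu (k+1) + 4 * nu (k+1)) := by ring
      rw [hexp]
      have e1 : (2:ℕ)^(k+1) = 2^k * 2 := pow_succ 2 k
      have e2 : (2:ℕ)^(k+2) = 2^(k+1) * 2 := pow_succ 2 (k+1)
      have e3 : (2:ℕ)^(k+1+2) = 2^(k+2) * 2 := pow_succ 2 (k+2)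
      omega

lemma Kbound : ∀ M, 8 ≤ M → 2^((M+2)/2) * M ≤ 2^M := by
  intro M
  induction M using Nat.strong_induction_on with
  | _ M ih =>
    intro hM
    rcases Nat.lt_or_ge M 10 with h | h
    · interval_cases M
      · decide
      · decide
    · obtain ⟨K, rfl⟩ : ∃ K, M = K + 2 := ⟨M - 2, by omega⟩
      have hK := ih K (by omega) (by omega)
      have hdiv : (K+2+2)/2 = (K+2)/2 + 1 := by omega
      rw [hdiv, pow_succ]
      calc 2^((K+2)/2) * 2 * (K+2) = (2^((K+2)/2) * K) * 2 + 2^((K+2)/2) * 4 := by ring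
        _ ≤ 2^K * 2 + (2^((K+2)/2) * K) := by
            have h4K : 2^((K+2)/2) * 4 ≤ 2^((K+2)/2) * K := by
              apply Nat.mul_le_mul_left
              omega
            omega
        _ ≤ 2^K * 2 + 2^K := by omega
        _ ≤ 2^(K+2) := by
            have : (2:ℕ)^(K+2) = 4 * 2^K := by rw [pow_add]; ring
            omega

lemma Jbound : ∀ M, 8 ≤ M → 2^((M+2)/2) ≤ nu M + 2 := by
  intro M hM
  have hK := Kbound M hM
  have h1 : (2^((M+2)/2) - 2) * M ≤ 2^M - 2 := by
    have h2 : 2 * 2 ≤ 2 * M := by omega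
    have h3 : (2^((M+2)/2) - 2) * M = 2^((M+2)/2) * M - 2 * M := by
      rw [Nat.sub_mul]
    omega
  have h4 : 2^((M+2)/2) - 2 ≤ nu M := by
    rw [nu, Nat.le_div_iff_mul_le (by omega : 0 < M)]
    exact h1
  omega

lemma count_ineq {d : ℕ} (hd : 3 ≤ d) : (∑ t ∈ Finset.Icc 2 (d-1), NN t) + 2 ≤ NN (d+1) := by
  have hSig : (∑ t ∈ Finset.Icc 2 (d-1), NN t) ≤ S (d-1) := by
    apply Finset.sum_le_sum
    intro t ht
    exact N_le_nu (Finset.mem_Icc.mp ht).1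
  have hlow := lowerN (m := d+1) (by omega)
  rcases Nat.lt_or_ge d 9 with hsmall | hbig
  · interval_cases d
    · have hs : S 2 = 1 := by decide
      norm_num at hSig hlow ⊢
      omega
    · have hs : S 3 = 3 := by decide
      norm_num at hSig hlow ⊢
      omega
    · have hs : S 4 = 6 := by decide
      norm_num at hSig hlow ⊢
      omega
    · have hs : S 5 = 12 := by decide
      norm_num at hSig hlow ⊢
      omega
    · have hs : S 6 = 22 := by decide
      norm_num at hSig hlow ⊢
      omega
    · have hs : S 7 = 40 := by decide
      norm_num at hSig hlow ⊢
      omega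
  · -- general case
    have hG := Gbound (d-1) (by omega)
    have hJ := Jbound (d-1) (by omega)
    have hnuS : nu (d-1) ≤ S (d-1) := by
      apply Finset.single_le_sum (f := fun t => nu t) (fun _ _ => Nat.zero_le _)
      rw [Finset.mem_Icc]
      omega
    have hd1 : d - 1 + 2 = d + 1 := by omega
    rw [hd1] at hJ
    have hd2 : d - 1 + 4 = d + 3 := by omega
    rw [hd2] at hG
    have hd3 : d - 1 + 2 = d + 1 := by omega
    -- E ≤ 2 * (S + 2)
    have hE : 2^((d+1)/2 + 1) ≤ 2 * (S (d-1) + 2) := by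
      have : (2:ℕ)^((d+1)/2+1) = 2^((d+1)/2) * 2 := pow_succ 2 _
      omega
    -- (d+1)(S+2) + E ≤ (d+3)(S+2) ≤ 2^(d+1)
    have hchain : (d+1) * (S (d-1) + 2) + 2^((d+1)/2+1) ≤ 2^(d+1) := by
      have h1 : (d+1) * (S (d-1) + 2) + 2 * (S (d-1) + 2) = (d+3) * (S (d-1) + 2) := by ring
      have h2 : (2:ℕ)^(d-1+2) = 2^(d+1) := by rw [hd1]
      omega
    -- combine with lower bound
    have hfin : (d+1) * (S (d-1) + 2) ≤ (d+1) * NN (d+1) := by omega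
    have := Nat.le_of_mul_le_mul_left hfin (by omega : 0 < d + 1)
    omega

lemma eval0_ne_of_dvd {p e : Poly} (hdvd : p ∣ e) (he : e.eval 0 ≠ 0) : p.eval 0 ≠ 0 := by
  obtain ⟨c, rfl⟩ := hdvd
  rw [Polynomial.eval_mul] at he
  exact fun h => he (by rw [h, zero_mul])

lemma ne_zero_of_eval0 {e : Poly} (he : e.eval 0 ≠ 0) : e ≠ 0 := by
  rintro rfl
  simp at he

/-- two distinct irreducibles of degree d+1 cannot divide the same poly of degree 2d -/
lemma big_primes_eq {s s' e : Poly} {d : ℕ} (hs : Irreducible s) (hs' : Irreducible s')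
    (hds : s.natDegree = d + 1) (hds' : s'.natDegree = d + 1)
    (he0 : e ≠ 0) (hdege : e.natDegree = 2*d)
    (h1 : s ∣ e) (h2 : s' ∣ e) : s = s' := by
  by_contra hne
  have hcop := coprime_of_distinct_irreducible hs hs' hne
  have hmul : s * s' ∣ e := hcop.mul_dvd h1 h2
  have := Polynomial.natDegree_le_of_dvd hmul he0
  rw [Polynomial.natDegree_mul hs.ne_zero hs'.ne_zero, hds, hds', hdege] at this
  omega

lemma exists_free_prime {d : ℕ} (hd : 3 ≤ d) {T : Set Poly}
    (hdeg : ∀ e ∈ T, e.natDegree = 2*d) (hev : ∀ e ∈ T, e.eval 0 ≠ 0)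
    (hpair : ∀ f ∈ T, ∀ g ∈ T, f ≠ g → (EuclideanDomain.gcd f g).natDegree ≤ 1) :
    ∃ s : Poly, Irreducible s ∧ s.natDegree = d + 1 ∧ ∀ e ∈ T, ¬ s ∣ e := by
  classical
  by_contra hcon
  push_neg at hcon
  -- every irreducible of degree d+1 divides some member of T
  have howner : ∀ s ∈ irrF (d+1), ∃ e ∈ T, s ∣ e := by
    intro s hs
    obtain ⟨hirr, hdeg'⟩ := mem_irrF.mp hs
    exact hcon s hirr hdeg'
  set GoodP : Poly → Prop := fun s => ∃ e ∈ T, s ∣ e ∧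
    ∃ q : Poly, Irreducible q ∧ 2 ≤ q.natDegree ∧ q.natDegree ≤ d-1 ∧ q ∣ e with hGoodP
  set Good : Finset Poly := (irrF (d+1)).filter GoodP with hGood
  set Star : Finset Poly := (irrF (d+1)).filter (fun s => ¬ GoodP s) with hStar
  have hcards : NN (d+1) = Good.card + Star.card := by
    rw [hGood, hStar, Finset.card_filter_add_card_filter_not]
    rfl
  -- star elements: at most one
  have hstar_sq : ∀ s ∈ Star, ∃ e ∈ T, s ∣ e ∧ ((X+1 : Poly))^2 ∣ e := by
    intro s hsmem
    rw [hStar, Finset.mem_filter] at hsmem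
    obtain ⟨hsF, hnotgood⟩ := hsmem
    obtain ⟨hirr, hdegs⟩ := mem_irrF.mp hsF
    obtain ⟨e, heT, hse⟩ := howner s hsF
    refine ⟨e, heT, hse, ?_⟩
    have hnoq : ¬ ∃ q : Poly, Irreducible q ∧ 2 ≤ q.natDegree ∧ q.natDegree ≤ d-1 ∧ q ∣ e := by
      intro hq
      exact hnotgood ⟨e, heT, hse, hq⟩
    obtain ⟨c, hc⟩ := hse
    have he0 : e ≠ 0 := ne_zero_of_eval0 (hev e heT)
    have hc0 : c ≠ 0 := by rintro rfl; rw [mul_zero] at hc; exact he0 hc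
    have hdegc : c.natDegree = d - 1 := by
      have := hdeg e heT
      rw [hc, Polynomial.natDegree_mul hirr.ne_zero hc0, hdegs] at this
      omega
    have hcdvd : c ∣ e := ⟨s, by rw [hc]; ring⟩
    have hallc : ∀ p : Poly, Prime p → p ∣ c → p = X + 1 := by
      intro p hp hpc
      have hpe : p ∣ e := hpc.trans hcdvd
      have hple : p.natDegree ≤ d - 1 := by
        rw [← hdegc]
        exact Polynomial.natDegree_le_of_dvd hpc hc0
      by_cases h2p : 2 ≤ p.natDegree
      · exact absurd ⟨p, hp.irreducible, h2p, hple, hpe⟩ hnoq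
      · apply prime_eq_X_add_one hp (by omega)
        have h5 := eval0_ne_of_dvd hpe (hev e heT)
        rwa [Polynomial.coeff_zero_eq_eval_zero]
    have := pow_two_dvd hc0 (by omega) hallc
    exact this.trans hcdvd
  have hstar_card : Star.card ≤ 1 := by
    rw [Finset.card_le_one]
    intro s hs s' hs'
    obtain ⟨e, heT, hse, hsq⟩ := hstar_sq s hs
    obtain ⟨e', heT', hse', hsq'⟩ := hstar_sq s' hs'
    have hX2 : (2:ℕ) ≤ (((X:Poly)+1)^2).natDegree := by
      have h1 : ((X:Poly)+1).natDegree = 1 := by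
        simpa using Polynomial.natDegree_X_add_C (1 : ZMod 2)
      rw [Polynomial.natDegree_pow, h1]
    have hee' : e = e' := owner_unique hpair hX2 heT heT'
      (ne_zero_of_eval0 (hev e heT)) hsq hsq'
    subst hee'
    obtain ⟨hi, hd1⟩ := mem_irrF.mp (Finset.mem_filter.mp (hStar ▸ hs)).1
    obtain ⟨hi', hd1'⟩ := mem_irrF.mp (Finset.mem_filter.mp (hStar ▸ hs')).1
    exact big_primes_eq hi hi' hd1 hd1' (ne_zero_of_eval0 (hev e heT)) (hdeg e heT) hse hse'
  -- good elements: inject into small owned primes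
  set Small : Finset Poly := (Finset.Icc 2 (d-1)).biUnion irrF with hSmall
  -- the injection
  have hgood_card : Good.card ≤ Small.card := by
    have hchoice : ∀ s ∈ Good, ∃ q e : Poly, e ∈ T ∧ s ∣ e ∧ Irreducible q ∧
        2 ≤ q.natDegree ∧ q.natDegree ≤ d-1 ∧ q ∣ e := by
      intro s hsmem
      obtain ⟨-, e, heT, hse, q, hq⟩ := Finset.mem_filter.mp hsmem
      exact ⟨q, e, heT, hse, hq⟩
    choose fq fe hfeT hfse hfqirr hfq2 hfqd hfqe using hchoice
    apply Finset.card_le_card_of_injOn (fun s => if h : s ∈ Good then fq s h else 1)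
    · intro s hsmem
      simp only [Finset.mem_coe] at hsmem ⊢
      rw [dif_pos hsmem, hSmall, Finset.mem_biUnion]
      exact ⟨(fq s hsmem).natDegree, Finset.mem_Icc.mpr ⟨hfq2 s hsmem, hfqd s hsmem⟩,
        mem_irrF.mpr ⟨hfqirr s hsmem, rfl⟩⟩
    · intro s hs s' hs' heq
      simp only [Finset.mem_coe] at hs hs'
      have heq2 : (if h : s ∈ Good then fq s h else 1) = (if h : s' ∈ Good then fq s' h else 1) := heq
      rw [dif_pos hs, dif_pos hs'] at heq2
      clear heq
      rename' heq2 => heq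
      have hee : fe s hs = fe s' hs' := by
        apply owner_unique hpair (hfq2 s hs) (hfeT s hs) (hfeT s' hs')
          (ne_zero_of_eval0 (hev _ (hfeT s hs))) (hfqe s hs)
        rw [heq]
        exact hfqe s' hs'
      obtain ⟨hi, hd1⟩ := mem_irrF.mp (Finset.mem_filter.mp hs).1
      obtain ⟨hi', hd1'⟩ := mem_irrF.mp (Finset.mem_filter.mp hs').1
      apply big_primes_eq hi hi' hd1 hd1'
        (ne_zero_of_eval0 (hev _ (hfeT s hs))) (hdeg _ (hfeT s hs)) (hfse s hs)
      rw [hee]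
      exact hfse s' hs'
  have hdisj : ∀ t₁ ∈ Finset.Icc 2 (d-1), ∀ t₂ ∈ Finset.Icc 2 (d-1), t₁ ≠ t₂ →
      Disjoint (irrF t₁) (irrF t₂) := by
    intro t₁ h₁ t₂ h₂ hne
    rw [Finset.disjoint_left]
    intro p hp₁ hp₂
    have e1 := (mem_irrF.mp hp₁).2
    have e2 := (mem_irrF.mp hp₂).2
    omega
  have hsmall_card : Small.card = ∑ t ∈ Finset.Icc 2 (d-1), NN t := by
    rw [hSmall, Finset.card_biUnion hdisj]
    rfl
  have := count_ineq hd
  omega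

lemma pair_both {w e : Poly} (hw : w ≠ 0) (he : e ≠ 0)
    (hcom : ∀ p : Poly, Prime p → p ∣ w → p ∣ e → p = X + 1)
    (hsq : ¬ (X+1)^2 ∣ w ∨ ¬ (X+1)^2 ∣ e) :
    (EuclideanDomain.gcd w e).natDegree ≤ 1 ∧ (EuclideanDomain.gcd e w).natDegree ≤ 1 :=
  ⟨natDegree_gcd_le_one hw hcom hsq,
   natDegree_gcd_le_one he (fun p hp h1 h2 => hcom p hp h2 h1) hsq.symm⟩

/-- prime divisor of an irreducible equals it -/
lemma prime_dvd_irred {p q : Poly} (hp : Prime p) (hq : Irreducible q) (h : p ∣ q) : p = q :=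
  associated_eq (hp.irreducible.associated_of_dvd hq h)

lemma not_sq_dvd_gsq {g : Poly} (hg : Irreducible g) (hdeg : 2 ≤ g.natDegree) :
    ¬ ((X+1:Poly))^2 ∣ g^2 := by
  intro hdvd
  have h1 : (X+1:Poly) ∣ g^2 := (dvd_pow_self _ (by norm_num)).trans hdvd
  have h2 : (X+1:Poly) ∣ g := prime_X_add_one.dvd_of_dvd_pow h1
  have h3 := prime_dvd_irred prime_X_add_one hg h2
  have h4 : (X+1:Poly).natDegree = 1 := by
    simpa using Polynomial.natDegree_X_add_C (1 : ZMod 2)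
  rw [← h3] at hdeg
  omega

/-- The generic improvement: if we can add `a = g^2` and `b = w` while removing `f`,
we contradict maximality. -/
lemma improve {n : ℕ} {R : Set Poly}
    (hRS : ∀ f ∈ R, f.Monic ∧ f.natDegree = n ∧ f.eval 0 ≠ 0)
    (hRp : ∀ f ∈ R, ∀ g ∈ R, f ≠ g → (EuclideanDomain.gcd f g).natDegree ≤ 1)
    (hmax : ∀ R' : Set Poly,
      (∀ f ∈ R', f.Monic ∧ f.natDegree = n ∧ f.eval 0 ≠ 0) →
      (∀ f ∈ R', ∀ g ∈ R', f ≠ g → (EuclideanDomain.gcd f g).natDegree ≤ 1) →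
      R'.ncard ≤ R.ncard)
    {f a b : Poly} (hf : f ∈ R)
    (hadeg : a.natDegree = n) (ha0 : a.eval 0 ≠ 0)
    (hbdeg : b.natDegree = n) (hb0 : b.eval 0 ≠ 0)
    (hab : a ≠ b)
    (haR : a ∉ R)
    (hbR : b ∈ R → b = f)
    (hpair_ab : (EuclideanDomain.gcd a b).natDegree ≤ 1 ∧ (EuclideanDomain.gcd b a).natDegree ≤ 1)
    (hpair_aR : ∀ e ∈ R, e ≠ f →
      (EuclideanDomain.gcd a e).natDegree ≤ 1 ∧ (EuclideanDomain.gcd e a).natDegree ≤ 1)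
    (hpair_bR : ∀ e ∈ R, e ≠ f →
      (EuclideanDomain.gcd b e).natDegree ≤ 1 ∧ (EuclideanDomain.gcd e b).natDegree ≤ 1) :
    False := by
  classical
  have hRfin : R.Finite := by
    apply (finite_degree_le n).subset
    intro e he
    exact le_of_eq (hRS e he).2.1
  set R' : Set Poly := insert a (insert b (R \ {f})) with hR'
  have hRS' : ∀ x ∈ R', x.Monic ∧ x.natDegree = n ∧ x.eval 0 ≠ 0 := by
    intro x hx
    rcases hx with rfl | rfl | ⟨hxR, -⟩
    · exact ⟨monic_of_ne_zero (ne_zero_of_eval0 ha0), hadeg, ha0⟩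
    · exact ⟨monic_of_ne_zero (ne_zero_of_eval0 hb0), hbdeg, hb0⟩
    · exact hRS x hxR
  have hRp' : ∀ x ∈ R', ∀ y ∈ R', x ≠ y → (EuclideanDomain.gcd x y).natDegree ≤ 1 := by
    intro x hx y hy hxy
    rcases hx with rfl | rfl | ⟨hxR, hxf⟩ <;> rcases hy with rfl | rfl | ⟨hyR, hyf⟩
    · exact absurd rfl hxy
    · exact hpair_ab.1
    · exact (hpair_aR y hyR (by simpa using hyf)).1
    · exact hpair_ab.2
    · exact absurd rfl hxy
    · exact (hpair_bR y hyR (by simpa using hyf)).1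
    · exact (hpair_aR x hxR (by simpa using hxf)).2
    · exact (hpair_bR x hxR (by simpa using hxf)).2
    · exact hRp x hxR y hyR hxy
  have hdfin : (R \ {f}).Finite := hRfin.diff
  have hbnot : b ∉ R \ {f} := by
    rintro ⟨hbRmem, hbf⟩
    exact hbf (hbR hbRmem)
  have hanot : a ∉ insert b (R \ {f}) := by
    rintro (rfl | ⟨haRmem, -⟩)
    · exact hab rfl
    · exact haR haRmem
  have h1 : (insert b (R \ {f})).ncard = (R \ {f}).ncard + 1 :=
    Set.ncard_insert_of_notMem hbnot hdfin
  have h2 : R'.ncard = (insert b (R \ {f})).ncard + 1 :=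
    Set.ncard_insert_of_notMem hanot (hdfin.insert b)
  have h3 : (R \ {f}).ncard + 1 = R.ncard :=
    Set.ncard_diff_singleton_add_one hf hRfin
  have := hmax R' hRS' hRp'
  omega

end MCS

open MCS in
theorem maximal_contains_squares (n : ℕ) (hn : 4 ≤ n) (he : Even n)
    (R : Set ((ZMod 2)[X]))
    (hRS : ∀ f ∈ R, f.Monic ∧ f.natDegree = n ∧ f.eval 0 ≠ 0)
    (hRp : ∀ f ∈ R, ∀ g ∈ R, f ≠ g → (EuclideanDomain.gcd f g).natDegree ≤ 1)
    (hmax : ∀ R' : Set ((ZMod 2)[X]),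
      (∀ f ∈ R', f.Monic ∧ f.natDegree = n ∧ f.eval 0 ≠ 0) →
      (∀ f ∈ R', ∀ g ∈ R', f ≠ g → (EuclideanDomain.gcd f g).natDegree ≤ 1) →
      R'.ncard ≤ R.ncard) :
    ∀ g : (ZMod 2)[X], g.Monic → Irreducible g → g.natDegree = n / 2 → g ≠ X →
      g ^ 2 ∈ R := by
  intro g hgmon hgirr hgdeg hgX
  by_contra hg2
  -- setup
  set d : ℕ := n / 2 with hdd
  have hn2d : n = 2 * d := by
    obtain ⟨c, hc⟩ := he
    omega
  have hd2 : 2 ≤ d := by omega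
  have hdeg_g : g.natDegree = d := hgdeg
  have hg0 : g ≠ 0 := hgirr.ne_zero
  have hgev : g.eval 0 ≠ 0 := by
    intro h
    have hX : (X : Poly) ∣ g := Polynomial.X_dvd_iff.mpr (by
      rwa [Polynomial.coeff_zero_eq_eval_zero])
    exact hgX (prime_dvd_irred MCS.prime_X hgirr hX).symm
  -- facts about g^2
  have hg2deg : (g^2).natDegree = n := by
    rw [Polynomial.natDegree_pow, hdeg_g]
    omega
  have hg2ev : (g^2).eval 0 ≠ 0 := by
    rw [Polynomial.eval_pow]
    exact pow_ne_zero _ hgev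
  have hg2nsq := not_sq_dvd_gsq hgirr (by omega)
  -- common: pair of g^2 with e ∈ R not divisible by g
  have hpair_g2 : ∀ e ∈ R, ¬ g ∣ e →
      (EuclideanDomain.gcd (g^2) e).natDegree ≤ 1 ∧
      (EuclideanDomain.gcd e (g^2)).natDegree ≤ 1 := by
    intro e heR hge
    apply pair_both (ne_zero_of_eval0 hg2ev) (ne_zero_of_eval0 (hRS e heR).2.2)
    · intro p hp hpg2 hpe
      exfalso
      have : p = g := prime_dvd_irred hp hgirr (hp.dvd_of_dvd_pow hpg2)
      exact hge (this ▸ hpe)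
    · exact Or.inl hg2nsq
  by_cases hex : ∃ f ∈ R, g ∣ f
  · -- Case B : a unique f ∈ R divisible by g
    obtain ⟨f, hfR, hgf⟩ := hex
    have hfev : f.eval 0 ≠ 0 := (hRS f hfR).2.2
    have hf0 : f ≠ 0 := ne_zero_of_eval0 hfev
    have hfdeg : f.natDegree = n := (hRS f hfR).2.1
    have huniq : ∀ e ∈ R, g ∣ e → e = f := by
      intro e heR hge
      exact owner_unique hRp (by omega : 2 ≤ g.natDegree)
        heR hfR (ne_zero_of_eval0 (hRS e heR).2.2) hge hgf
    -- cofactor h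
    obtain ⟨h, hfh⟩ := hgf
    have hh0 : h ≠ 0 := by rintro rfl; rw [mul_zero] at hfh; exact hf0 hfh
    have hhdeg : h.natDegree = d := by
      have := hfdeg
      rw [hfh, Polynomial.natDegree_mul hg0 hh0, hdeg_g] at this
      omega
    have hhev : h.eval 0 ≠ 0 := by
      have : h ∣ f := ⟨g, by rw [hfh]; ring⟩
      exact eval0_ne_of_dvd this hfev
    have hhf : h ∣ f := ⟨g, by rw [hfh]; ring⟩
    have hfne : f ≠ g^2 := by
      rintro rfl
      exact hg2 hfR
    have hhg : h ≠ g := by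
      rintro rfl
      exact hfne (by rw [hfh, sq])
    have hgh : ¬ g ∣ h := by
      intro ⟨c, hc⟩
      have hc0 : c ≠ 0 := by rintro rfl; rw [mul_zero] at hc; exact hh0 hc
      have hcdeg : c.natDegree = 0 := by
        have := hhdeg
        rw [hc, Polynomial.natDegree_mul hg0 hc0, hdeg_g] at this
        omega
      have hcm : c.Monic := monic_of_ne_zero hc0
      have hc1 : c = 1 := (Polynomial.Monic.natDegree_eq_zero hcm).mp hcdeg
      rw [hc1, mul_one] at hc
      exact hhg hc
    -- the common prime rule for divisors of h vs other members of R
    have hcom_h : ∀ e ∈ R, e ≠ f → ∀ p : Poly, Prime p → p ∣ h → p ∣ e → p = X + 1 := by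
      intro e heR hef p hp hph hpe
      have hpf : p ∣ f := hph.trans hhf
      have hgcd0 : EuclideanDomain.gcd f e ≠ 0 := by
        rw [Ne, EuclideanDomain.gcd_eq_zero_iff]
        rintro ⟨rfl, -⟩
        exact hf0 rfl
      have hdvdg : p ∣ EuclideanDomain.gcd f e := EuclideanDomain.dvd_gcd hpf hpe
      have hle := Polynomial.natDegree_le_of_dvd hdvdg hgcd0
      have := hRp f hfR e heR (fun hh => hef hh.symm)
      apply prime_eq_X_add_one hp (by omega)
      have := eval0_ne_of_dvd hpe (hRS e heR).2.2
      rwa [Polynomial.coeff_zero_eq_eval_zero]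
    by_cases hcase : (X+1 : Poly) ∣ h ∧ ∃ e₀ ∈ R, e₀ ≠ f ∧ ((X+1:Poly))^2 ∣ e₀
    · -- Case B2 : w = k * s
      obtain ⟨hX1h, e₀, he₀R, he₀f, he₀sq⟩ := hcase
      have hnsq_h : ¬ ((X+1:Poly))^2 ∣ h := by
        intro hsq
        have h1 : ((X+1:Poly))^2 ∣ f := hsq.trans hhf
        have hgcd0 : EuclideanDomain.gcd f e₀ ≠ 0 := by
          rw [Ne, EuclideanDomain.gcd_eq_zero_iff]
          rintro ⟨rfl, -⟩
          exact hf0 rfl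
        have hdvdg := EuclideanDomain.dvd_gcd h1 he₀sq
        have hle := Polynomial.natDegree_le_of_dvd hdvdg hgcd0
        have hX2 : (((X:Poly)+1)^2).natDegree = 2 := by
          rw [Polynomial.natDegree_pow]
          have hx1 : ((X:Poly)+1).natDegree = 1 := by
            simpa using Polynomial.natDegree_X_add_C (1 : ZMod 2)
          omega
        have := hRp f hfR e₀ he₀R (fun hh => he₀f hh.symm)
        omega
      obtain ⟨k, hhk⟩ := hX1h
      have hk0 : k ≠ 0 := by rintro rfl; rw [mul_zero] at hhk; exact hh0 hhk
      have hX1deg : (X+1 : Poly).natDegree = 1 := by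
        simpa using Polynomial.natDegree_X_add_C (1 : ZMod 2)
      have hkdeg : k.natDegree = d - 1 := by
        have := hhdeg
        rw [hhk, Polynomial.natDegree_mul prime_X_add_one.ne_zero hk0, hX1deg] at this
        omega
      have hkdvdh : k ∣ h := ⟨X+1, by rw [hhk]; ring⟩
      have hkev : k.eval 0 ≠ 0 := eval0_ne_of_dvd hkdvdh hhev
      have hX1k : ¬ (X+1 : Poly) ∣ k := by
        intro ⟨c, hc⟩
        apply hnsq_h
        rw [hhk, hc]
        exact ⟨c, by ring⟩
      have hd3 : 3 ≤ d := by
        by_contra hlt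
        have hdd2 : d = 2 := by omega
        have hk1 : k.natDegree = 1 := by omega
        have hkm : k.Monic := monic_of_ne_zero hk0
        have := hkm.eq_X_add_C hk1
        rcases eq_or_ne (k.coeff 0) 0 with h0 | h0
        · rw [Polynomial.coeff_zero_eq_eval_zero] at h0
          exact hkev h0
        · have h1 : k.coeff 0 = 1 := by
            have : k.coeff 0 ≠ 0 := h0
            revert this
            generalize k.coeff 0 = z
            intro hz
            fin_cases z
            · exact absurd rfl hz
            · rfl
          rw [h1, map_one] at this
          exact hX1k (this ▸ dvd_rfl)
      -- free prime
      obtain ⟨s, hsirr, hsdeg, hsfree⟩ := exists_free_prime hd3 (T := R \ {f})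
        (fun e he => by rw [← hn2d]; exact (hRS e he.1).2.1)
        (fun e he => (hRS e he.1).2.2)
        (fun x hx y hy hxy => hRp x hx.1 y hy.1 hxy)
      have hs0 : s ≠ 0 := hsirr.ne_zero
      have hsev : s.eval 0 ≠ 0 := by
        intro h0
        have hX : (X : Poly) ∣ s := Polynomial.X_dvd_iff.mpr (by
          rwa [Polynomial.coeff_zero_eq_eval_zero])
        have := prime_dvd_irred MCS.prime_X hsirr hX
        rw [← this] at hsdeg
        rw [Polynomial.natDegree_X] at hsdeg
        omega
      set w : Poly := k * s with hw
      have hw0 : w ≠ 0 := mul_ne_zero hk0 hs0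
      have hwdeg : w.natDegree = n := by
        rw [hw, Polynomial.natDegree_mul hk0 hs0, hkdeg, hsdeg]
        omega
      have hwev : w.eval 0 ≠ 0 := by
        rw [hw, Polynomial.eval_mul]
        exact mul_ne_zero hkev hsev
      have hwcom : ∀ e ∈ R, e ≠ f → ∀ p : Poly, Prime p → p ∣ w → p ∣ e → p = X + 1 := by
        intro e heR hef p hp hpw hpe
        rcases hp.dvd_mul.mp (hw ▸ hpw) with hpk | hps
        · have := hcom_h e heR hef p hp (hpk.trans hkdvdh) hpe
          exact this
        · have hpseq : p = s := prime_dvd_irred hp hsirr hps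
          exfalso
          exact hsfree e ⟨heR, hef⟩ (hpseq ▸ hpe)
      have hwnX1 : ¬ ((X+1:Poly))^2 ∣ w := by
        intro hdvd
        have h1 : (X+1:Poly) ∣ w := (dvd_pow_self _ (by norm_num)).trans hdvd
        rcases prime_X_add_one.dvd_mul.mp (hw ▸ h1) with h2 | h2
        · exact hX1k h2
        · have := prime_dvd_irred prime_X_add_one hsirr h2
          rw [← this, hX1deg] at hsdeg
          omega
      have hgw : ¬ g ∣ w := by
        intro hdvd
        rcases (hgirr.prime.dvd_mul).mp (hw ▸ hdvd) with h2 | h2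
        · have := Polynomial.natDegree_le_of_dvd h2 hk0
          omega
        · have heq := prime_dvd_irred hgirr.prime hsirr h2
          rw [heq] at hdeg_g
          omega
      -- apply improve
      apply improve hRS hRp hmax hfR hg2deg hg2ev hwdeg hwev ?_ hg2 ?_ ?_ ?_ ?_
      · -- g^2 ≠ w
        intro heq
        exact hgw (heq ▸ (dvd_pow_self g (by norm_num)))
      · -- w ∈ R → w = f
        intro hwR
        exfalso
        have hwf : w ≠ f := by
          intro heq
          exact hgw (heq ▸ ⟨h, hfh⟩)
        exact hsfree w ⟨hwR, hwf⟩ ⟨k, by rw [hw]; ring⟩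
      · -- pair g^2 w
        apply pair_both (ne_zero_of_eval0 hg2ev) hw0
        · intro p hp hpg2 hpw
          exfalso
          have hpg : p = g := prime_dvd_irred hp hgirr (hp.dvd_of_dvd_pow hpg2)
          exact hgw (hpg ▸ hpw)
        · exact Or.inl hg2nsq
      · -- pair g^2 vs e
        intro e heR hef
        apply hpair_g2 e heR
        intro hge
        exact hef (huniq e heR hge)
      · -- pair w vs e
        intro e heR hef
        apply pair_both hw0 (ne_zero_of_eval0 (hRS e heR).2.2)
        · exact hwcom e heR hef
        · exact Or.inl hwnX1
    · -- Case B1 : w = h^2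
      have hB1 : ∀ e ∈ R, e ≠ f → ¬ (X+1 : Poly) ∣ h ∨ ¬ ((X+1:Poly))^2 ∣ e := by
        intro e heR hef
        by_cases hX1h : (X+1 : Poly) ∣ h
        · right
          intro hsq
          exact hcase ⟨hX1h, e, heR, hef, hsq⟩
        · left; exact hX1h
      have hh2deg : (h^2).natDegree = n := by
        rw [Polynomial.natDegree_pow, hhdeg]
        omega
      have hh2ev : (h^2).eval 0 ≠ 0 := by
        rw [Polynomial.eval_pow]
        exact pow_ne_zero _ hhev
      have hh20 : h^2 ≠ 0 := ne_zero_of_eval0 hh2ev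
      apply improve hRS hRp hmax hfR hg2deg hg2ev hh2deg hh2ev ?_ hg2 ?_ ?_ ?_ ?_
      · -- g^2 ≠ h^2
        intro heq
        exact hgh (hgirr.prime.dvd_of_dvd_pow (n := 2) (heq ▸ (dvd_pow_self g (by norm_num))))
      · -- h^2 ∈ R → h^2 = f
        intro hh2R
        have hhdvd2 : h ∣ h^2 := dvd_pow_self h (by norm_num)
        exact owner_unique hRp (by omega : 2 ≤ h.natDegree) hh2R hfR hh20 hhdvd2 hhf
      · -- pair g^2 (h^2)
        apply pair_both (ne_zero_of_eval0 hg2ev) hh20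
        · intro p hp hpg2 hph2
          exfalso
          have hpg : p = g := prime_dvd_irred hp hgirr (hp.dvd_of_dvd_pow hpg2)
          exact hgh (by rw [← hpg]; exact hp.dvd_of_dvd_pow hph2)
        · exact Or.inl hg2nsq
      · -- pair g^2 vs e
        intro e heR hef
        apply hpair_g2 e heR
        intro hge
        exact hef (huniq e heR hge)
      · -- pair h^2 vs e
        intro e heR hef
        apply pair_both hh20 (ne_zero_of_eval0 (hRS e heR).2.2)
        · intro p hp hph2 hpe
          exact hcom_h e heR hef p hp (hp.dvd_of_dvd_pow hph2) hpe
        · rcases hB1 e heR hef with hl | hr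
          · left
            intro hsq
            exact hl (prime_X_add_one.dvd_of_dvd_pow
              ((dvd_pow_self (X+1:Poly) (by norm_num)).trans hsq))
          · right; exact hr
  · -- Case A : no member divisible by g, add g^2
    push_neg at hex
    have hRfin : R.Finite := by
      apply (finite_degree_le n).subset
      intro e heR
      exact le_of_eq (hRS e heR).2.1
    set R' : Set Poly := insert (g^2) R with hR'
    have hRS' : ∀ x ∈ R', x.Monic ∧ x.natDegree = n ∧ x.eval 0 ≠ 0 := by
      intro x hx
      rcases hx with rfl | hxR
      · exact ⟨monic_of_ne_zero (ne_zero_of_eval0 hg2ev), hg2deg, hg2ev⟩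
      · exact hRS x hxR
    have hRp' : ∀ x ∈ R', ∀ y ∈ R', x ≠ y → (EuclideanDomain.gcd x y).natDegree ≤ 1 := by
      intro x hx y hy hxy
      rcases hx with rfl | hxR <;> rcases hy with rfl | hyR
      · exact absurd rfl hxy
      · exact (hpair_g2 y hyR (hex y hyR)).1
      · exact (hpair_g2 x hxR (hex x hxR)).2
      · exact hRp x hxR y hyR hxy
    have hcard : R'.ncard = R.ncard + 1 := Set.ncard_insert_of_notMem hg2 hRfin
    have := hmax R' hRS' hRp'
    omega
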